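/- If c₁ and c₂ are ad-nilpotent ideals of the Borel subalgebra b of a complex simple Lie algebra g and their weights coincide, |c₁| = |c₂|, then c₁ = c₂. -/

import Mathlib

/-!
STATEMENT 0 (Panyushev, "Normalizers of ad-nilpotent ideals", Prop. 2.2):
If `c₁`, `c₂` are ad-nilpotent ideals of the Borel subalgebra `b` of a complex
simple Lie algebra `g` and `|c₁| = |c₂|`, then `c₁ = c₂`.

We model the situation via the root system of `g`: an ad-nilpotent ideal of `b`
is the same thing as an upper ideal `I` of the poset of positive roots `Δ⁺`
(the ideal is `⊕_{γ∈I} g_γ`), and its weight is `|c| = Σ_{γ∈I} γ`.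
The root-system data of a complex simple Lie algebra is axiomatized in the
structure `RootSystemData` below (a finite reduced crystallographic root system
in a euclidean space, together with a base `Π` and the corresponding set of
positive roots `Δ⁺`).
-/

open scoped RealInnerProductSpace

/-- Axiomatization of the root system (with a fixed base and positive system)
of a complex simple Lie algebra: a finite, reduced, crystallographic root
system, invariant under its reflections, in a euclidean vector space `V`,
together with the set `Pi` of simple roots and the set `Δpos` of positive
roots. -/
structure RootSystemData (V : Type*) [NormedAddCommGroup V] [InnerProductSpace ℝ V]
    [FiniteDimensional ℝ V] where
  /-- the set of all roots -/
  Δ : Finset V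
  /-- the set of simple roots -/
  Pi : Finset V
  /-- the set of positive roots -/
  Δpos : Finset V
  zero_not_mem : (0 : V) ∉ Δ
  neg_mem : ∀ ⦃α⦄, α ∈ Δ → -α ∈ Δ
  reflect_mem : ∀ ⦃α⦄, α ∈ Δ → ∀ ⦃β⦄, β ∈ Δ → β - (2 * ⟪β, α⟫ / ⟪α, α⟫) • α ∈ Δ
  crystallographic : ∀ ⦃α⦄, α ∈ Δ → ∀ ⦃β⦄, β ∈ Δ → ∃ n : ℤ, 2 * ⟪β, α⟫ = n * ⟪α, α⟫
  reduced : ∀ ⦃α⦄, α ∈ Δ → ∀ t : ℝ, t • α ∈ Δ → t = 1 ∨ t = -1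
  Pi_subset : Pi ⊆ Δpos
  Pi_indep : LinearIndependent ℝ (Subtype.val : {x : V // x ∈ Pi} → V)
  Pi_span : Submodule.span ℝ (Pi : Set V) = ⊤
  Δpos_subset : Δpos ⊆ Δ
  mem_Δpos_iff : ∀ ⦃γ⦄, γ ∈ Δ →
    (γ ∈ Δpos ↔ ∃ c : V → ℕ, γ = ∑ α ∈ Pi, (c α : ℝ) • α)
  pos_or_neg : ∀ ⦃γ⦄, γ ∈ Δ → γ ∈ Δpos ∨ -γ ∈ Δpos

namespace RootSystemData

variable {V : Type*} [NormedAddCommGroup V] [InnerProductSpace ℝ V]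
  [FiniteDimensional ℝ V] (R : RootSystemData V)

/-- An upper ideal of the root poset `(Δ⁺, ≼)`: a subset of `Δ⁺` such that if
`γ ∈ I`, `μ ∈ Δ⁺` and `γ + μ` is a root, then `γ + μ ∈ I`.  Upper ideals
correspond bijectively to the ad-nilpotent ideals `c = ⊕_{γ∈I} g_γ` of the
Borel subalgebra `b`. -/
def IsUpperIdeal (I : Finset V) : Prop :=
  I ⊆ R.Δpos ∧ ∀ γ ∈ I, ∀ μ ∈ R.Δpos, γ + μ ∈ R.Δ → γ + μ ∈ I

end RootSystemData

/-- The weight `|c| = Σ_{γ ∈ I_c} γ` of an ad-nilpotent ideal. -/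
def idealWeight {V : Type*} [NormedAddCommGroup V] [InnerProductSpace ℝ V]
    [FiniteDimensional ℝ V] (I : Finset V) : V := ∑ γ ∈ I, γ

section Aux

variable {V : Type*} [NormedAddCommGroup V] [InnerProductSpace ℝ V]
  [FiniteDimensional ℝ V] (R : RootSystemData V)

/-- If `γ, μ` are distinct roots with `⟪γ, μ⟫ > 0`, then `γ - μ` is a root. -/
lemma RootSystemData.sub_mem {γ μ : V} (hγ : γ ∈ R.Δ) (hμ : μ ∈ R.Δ)
    (hne : γ ≠ μ) (hpos : 0 < ⟪γ, μ⟫) : γ - μ ∈ R.Δ := by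
  have hγ0 : γ ≠ 0 := fun h => R.zero_not_mem (h ▸ hγ)
  have hμ0 : μ ≠ 0 := fun h => R.zero_not_mem (h ▸ hμ)
  have hμμ : (0:ℝ) < ⟪μ, μ⟫ :=
    real_inner_self_nonneg.lt_of_ne fun h => hμ0 (inner_self_eq_zero.mp h.symm)
  have hγγ : (0:ℝ) < ⟪γ, γ⟫ :=
    real_inner_self_nonneg.lt_of_ne fun h => hγ0 (inner_self_eq_zero.mp h.symm)
  obtain ⟨n, hn⟩ := R.crystallographic hμ hγ
  obtain ⟨m, hm⟩ := R.crystallographic hγ hμ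
  have hμγ : ⟪μ, γ⟫ = ⟪γ, μ⟫ := real_inner_comm γ μ
  have hn1 : (1:ℤ) ≤ n := by
    have : (0:ℝ) < (n:ℝ) := by nlinarith
    have : (0:ℤ) < n := by exact_mod_cast this
    omega
  have hm1 : (1:ℤ) ≤ m := by
    have : (0:ℝ) < (m:ℝ) := by nlinarith [hμγ]
    have : (0:ℤ) < m := by exact_mod_cast this
    omega
  -- if `n = 1`, reflect `γ` in `μ`
  by_cases hn' : n = 1
  · have := R.reflect_mem hμ hγ
    have hcoef : 2 * ⟪γ, μ⟫ / ⟪μ, μ⟫ = 1 := by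
      rw [hn, hn']; field_simp; simp
    rw [hcoef, one_smul] at this
    exact this
  by_cases hm' : m = 1
  · have := R.reflect_mem hγ hμ
    have hcoef : 2 * ⟪μ, γ⟫ / ⟪γ, γ⟫ = 1 := by
      rw [hm, hm']; field_simp; simp
    rw [hcoef, one_smul] at this
    have := R.neg_mem this
    rwa [neg_sub] at this
  -- otherwise `n, m ≥ 2`, forcing equality in Cauchy–Schwarz
  exfalso
  have hn2 : (2:ℤ) ≤ n := by omega
  have hm2 : (2:ℤ) ≤ m := by omega
  have hn2' : (2:ℝ) ≤ (n:ℝ) := by exact_mod_cast hn2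
  have hm2' : (2:ℝ) ≤ (m:ℝ) := by exact_mod_cast hm2
  have hCS : ⟪γ, μ⟫ * ⟪γ, μ⟫ ≤ ⟪γ, γ⟫ * ⟪μ, μ⟫ := real_inner_mul_inner_self_le γ μ
  -- 4⟪γ,μ⟫² = n m ⟪γ,γ⟫⟪μ,μ⟫ ≥ 4⟪γ,γ⟫⟪μ,μ⟫ ≥ 4⟪γ,μ⟫² ⇒ equality
  have key : (4:ℝ) * (⟪γ, μ⟫ * ⟪γ, μ⟫) = ((n:ℝ) * (m:ℝ)) * (⟪γ, γ⟫ * ⟪μ, μ⟫) := by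
    have h4 : (2 * ⟪γ, μ⟫) * (2 * ⟪μ, γ⟫) = ((n:ℝ) * ⟪μ, μ⟫) * ((m:ℝ) * ⟪γ, γ⟫) := by
      rw [hn, hm]
    rw [hμγ] at h4
    ring_nf at h4 ⊢
    linarith
  have hnm : (4:ℝ) ≤ (n:ℝ) * (m:ℝ) := by nlinarith
  have hEq : ⟪γ, μ⟫ * ⟪γ, μ⟫ = ⟪γ, γ⟫ * ⟪μ, μ⟫ :=
    le_antisymm hCS (by nlinarith [mul_pos hγγ hμμ])
  -- equality in Cauchy–Schwarz with positive inner product: γ ∝ μ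
  have hinn : ⟪γ, μ⟫ = ‖γ‖ * ‖μ‖ := by
    have h1 : ⟪γ, γ⟫ = ‖γ‖ * ‖γ‖ := real_inner_self_eq_norm_mul_norm γ
    have h2 : ⟪μ, μ⟫ = ‖μ‖ * ‖μ‖ := real_inner_self_eq_norm_mul_norm μ
    have hnn : (0:ℝ) ≤ ‖γ‖ * ‖μ‖ := by positivity
    nlinarith [hEq]
  have hdep : ‖μ‖ • γ = ‖γ‖ • μ := inner_eq_norm_mul_iff_real.mp hinn
  have hμn : ‖μ‖ ≠ 0 := norm_ne_zero_iff.mpr hμ0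
  have hγeq : (‖γ‖ / ‖μ‖) • μ = γ := by
    have h' := congrArg (fun v => (‖μ‖⁻¹ : ℝ) • v) hdep
    simp only [smul_smul, inv_mul_cancel₀ hμn, one_smul] at h'
    rw [div_eq_mul_inv, mul_comm]
    exact h'.symm
  have ht := R.reduced hμ (‖γ‖ / ‖μ‖) (by rw [hγeq]; exact hγ)
  have htpos : (0:ℝ) < ‖γ‖ / ‖μ‖ := by
    have : (0:ℝ) < ‖γ‖ := norm_pos_iff.mpr hγ0
    have : (0:ℝ) < ‖μ‖ := norm_pos_iff.mpr hμ0
    positivity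
  rcases ht with ht | ht
  · rw [ht, one_smul] at hγeq; exact hne hγeq.symm
  · rw [ht] at htpos; norm_num at htpos

/-- A finite set of positive roots summing to zero is empty. -/
lemma RootSystemData.eq_empty_of_sum_eq_zero {A : Finset V} (hA : A ⊆ R.Δpos)
    (hsum : ∑ γ ∈ A, γ = 0) : A = ∅ := by
  classical
  -- choose a nonnegative coefficient expression for each positive root
  have hcoef : ∀ γ ∈ R.Δpos, ∃ c : V → ℕ, γ = ∑ α ∈ R.Pi, (c α : ℝ) • α :=
    fun γ hγ => (R.mem_Δpos_iff (R.Δpos_subset hγ)).mp hγ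
  set cf : V → V → ℕ := fun γ =>
    if h : γ ∈ R.Δpos then (hcoef γ h).choose else 0 with hcf
  have hcf_spec : ∀ γ ∈ R.Δpos, γ = ∑ α ∈ R.Pi, (cf γ α : ℝ) • α := by
    intro γ hγ
    simp only [hcf, dif_pos hγ]
    exact (hcoef γ hγ).choose_spec
  -- rewrite the sum and use linear independence of the simple roots
  have hzero : ∑ α ∈ R.Pi, ((∑ γ ∈ A, cf γ α : ℕ) : ℝ) • α = 0 := by
    rw [← hsum]
    rw [Finset.sum_congr rfl (fun γ hγ => hcf_spec γ (hA hγ)), Finset.sum_comm]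
    refine Finset.sum_congr rfl fun α _ => ?_
    rw [← Finset.sum_smul]
    push_cast
    rfl
  have hli := Fintype.linearIndependent_iff.mp R.Pi_indep
  have hzero' : ∑ i : {x // x ∈ R.Pi},
      ((∑ γ ∈ A, cf γ (i : V) : ℕ) : ℝ) • (i : V) = 0 := by
    rw [Finset.sum_coe_sort R.Pi (fun α => ((∑ γ ∈ A, cf γ α : ℕ) : ℝ) • α)]
    exact hzero
  have hcoef0 : ∀ α ∈ R.Pi, ∀ γ ∈ A, cf γ α = 0 := by
    intro α hα γ hγ
    have := hli (fun i => ((∑ γ ∈ A, cf γ (i : V) : ℕ) : ℝ)) hzero' ⟨α, hα⟩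
    have hnat : (∑ γ ∈ A, cf γ α) = 0 := by exact_mod_cast this
    exact (Finset.sum_eq_zero_iff.mp hnat) γ hγ
  -- hence every element of `A` is zero, contradiction unless `A = ∅`
  rw [Finset.eq_empty_iff_forall_notMem]
  intro γ hγ
  have hγΔ : γ ∈ R.Δ := R.Δpos_subset (hA hγ)
  have : γ = 0 := by
    rw [hcf_spec γ (hA hγ)]
    refine Finset.sum_eq_zero fun α hα => ?_
    rw [hcoef0 α hα γ hγ]
    simp
  exact R.zero_not_mem (this ▸ hγΔ)

end Aux

/-- If two ad-nilpotent ideals of the Borel subalgebra of a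
complex simple Lie algebra have the same weight, `|c₁| = |c₂|`, then they are
equal. -/
theorem weight_injective_of_upperIdeal
    {V : Type*} [NormedAddCommGroup V] [InnerProductSpace ℝ V] [FiniteDimensional ℝ V]
    (R : RootSystemData V) (I₁ I₂ : Finset V)
    (h₁ : R.IsUpperIdeal I₁) (h₂ : R.IsUpperIdeal I₂)
    (h : idealWeight I₁ = idealWeight I₂) :
    I₁ = I₂ := by
  classical
  set A := I₁ \ I₂ with hA
  set B := I₂ \ I₁ with hB
  -- the two symmetric-difference sums agree
  have hsum : ∑ γ ∈ A, γ = ∑ γ ∈ B, γ := by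
    have e1 : ∑ γ ∈ I₁ ∩ I₂, γ + ∑ γ ∈ A, γ = ∑ γ ∈ I₁, γ :=
      Finset.sum_inter_add_sum_sdiff I₁ I₂ _
    have e2 : ∑ γ ∈ I₂ ∩ I₁, γ + ∑ γ ∈ B, γ = ∑ γ ∈ I₂, γ :=
      Finset.sum_inter_add_sum_sdiff I₂ I₁ _
    have h' : ∑ γ ∈ I₁, γ = ∑ γ ∈ I₂, γ := h
    rw [Finset.inter_comm] at e2
    have := e1.trans (h'.trans e2.symm)
    exact add_left_cancel this
  -- no pairing with positive inner product between `A` and `B`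
  have hneg : ∀ γ ∈ A, ∀ μ ∈ B, ⟪γ, μ⟫ ≤ 0 := by
    intro γ hγ μ hμ
    by_contra hpos
    push_neg at hpos
    obtain ⟨hγ₁, hγ₂⟩ := Finset.mem_sdiff.mp hγ
    obtain ⟨hμ₂, hμ₁⟩ := Finset.mem_sdiff.mp hμ
    have hγp : γ ∈ R.Δpos := h₁.1 hγ₁
    have hμp : μ ∈ R.Δpos := h₂.1 hμ₂
    have hne : γ ≠ μ := fun e => hγ₂ (e ▸ hμ₂)
    have hsub : γ - μ ∈ R.Δ :=
      R.sub_mem (R.Δpos_subset hγp) (R.Δpos_subset hμp) hne hpos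
    rcases R.pos_or_neg hsub with hgm | hmg
    · -- γ - μ ∈ Δ⁺ : then γ = μ + (γ - μ) ∈ I₂
      have : μ + (γ - μ) ∈ I₂ := by
        refine h₂.2 μ hμ₂ (γ - μ) hgm ?_
        rw [add_sub_cancel]
        exact R.Δpos_subset hγp
      rw [add_sub_cancel] at this
      exact hγ₂ this
    · -- μ - γ ∈ Δ⁺ : then μ = γ + (μ - γ) ∈ I₁
      rw [neg_sub] at hmg
      have : γ + (μ - γ) ∈ I₁ := by
        refine h₁.2 γ hγ₁ (μ - γ) hmg ?_
        rw [add_sub_cancel]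
        exact R.Δpos_subset hμp
      rw [add_sub_cancel] at this
      exact hμ₁ this
  -- hence the common value ν is zero
  have hinner : ⟪(∑ γ ∈ A, γ), (∑ γ ∈ A, γ)⟫ ≤ 0 := by
    have heq : ⟪(∑ γ ∈ A, γ), (∑ γ ∈ A, γ)⟫ = ∑ γ ∈ A, ∑ μ ∈ B, ⟪γ, μ⟫ := by
      nth_rewrite 2 [hsum]
      rw [sum_inner]
      exact Finset.sum_congr rfl fun γ _ => inner_sum _ _ _
    rw [heq]
    exact Finset.sum_nonpos fun γ hγ =>
      Finset.sum_nonpos fun μ hμ => hneg γ hγ μ hμ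
  have hν0 : (∑ γ ∈ A, γ) = 0 :=
    inner_self_eq_zero.mp (le_antisymm hinner real_inner_self_nonneg)
  -- so both difference sets are empty
  have hAsub : A ⊆ R.Δpos := fun γ hγ => h₁.1 (Finset.mem_sdiff.mp hγ).1
  have hBsub : B ⊆ R.Δpos := fun γ hγ => h₂.1 (Finset.mem_sdiff.mp hγ).1
  have hAe : A = ∅ := R.eq_empty_of_sum_eq_zero hAsub hν0
  have hBe : B = ∅ := R.eq_empty_of_sum_eq_zero hBsub (hsum ▸ hν0)
  exact Finset.Subset.antisymm
    (Finset.sdiff_eq_empty_iff_subset.mp hAe)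
    (Finset.sdiff_eq_empty_iff_subset.mp hBe)
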